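/- arXiv:1810.07312 — 3 statements merged into one kernel-verified Lean document; each statement's English description precedes it below -/
import Mathlib

section
/- Let p < q be distinct odd primes, g a primitive root modulo p, and χ a nontrivial even Dirichlet character of conductor p. Then 2(χ(q)^{-1} - 1) + (χ(g^{-1}) - 1)(q - 1) ≠ 0. Similarly, if h is a primitive root modulo q and χ is a nontrivial even Dirichlet character of conductor q, then 2(χ(p)^{-1} - 1) + (χ(h^{-1}) - 1)(p - 1) ≠ 0. -/
open Complex in
lemma stmt3_aux_abs (a b : ℂ) (ha : ‖a‖ = 1) (hb : ‖b‖ = 1)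
    (hb1 : b ≠ 1) (c : ℝ) (hc : 2 ≤ c) :
    2 * (a - 1) + (b - 1) * (c : ℂ) ≠ 0 := by
  intro h
  have hre : 2 * a.re + b.re * c = 2 + c := by
    have := congrArg Complex.re h
    simp [Complex.add_re, Complex.mul_re, Complex.sub_re, Complex.ofReal_re,
      Complex.ofReal_im] at this
    linarith
  have hale : a.re ≤ 1 := ha ▸ Complex.re_le_norm a
  have hble : b.re ≤ 1 := hb ▸ Complex.re_le_norm b
  have hbre : b.re = 1 := by nlinarith
  have hnsq : b.re ^ 2 + b.im ^ 2 = 1 := by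
    have := Complex.sq_norm b
    rw [hb, Complex.normSq_apply] at this
    nlinarith
  have him : b.im = 0 := by nlinarith
  exact hb1 (Complex.ext (by simp [hbre]) (by simp [him]))

lemma stmt3_aux (p m g : ℕ) (hp : p.Prime) (hpodd : Odd p) (hm : ¬ p ∣ m) (hm3 : 3 ≤ m)
    (χ : DirichletCharacter ℂ p) (hg : orderOf (g : ZMod p) = p - 1) (hχ : χ ≠ 1) :
    2 * ((χ (m : ZMod p))⁻¹ - 1) + ((χ (g : ZMod p))⁻¹ - 1) * ((m : ℂ) - 1) ≠ 0 := by
  haveI : Fact p.Prime := ⟨hp⟩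
  have hp3 : 3 ≤ p := by
    have h2 : p ≠ 2 := by rintro rfl; exact (by norm_num : ¬ Odd 2) hpodd
    have := hp.two_le
    omega
  have hpm1 : p - 1 ≠ 0 := by omega
  -- g is a unit mod p
  have hgu : IsUnit (g : ZMod p) := by
    refine IsUnit.of_pow_eq_one (n := p - 1) ?_ hpm1
    rw [← hg]; exact pow_orderOf_eq_one _
  -- χ g ≠ 1
  have hχg : χ (g : ZMod p) ≠ 1 := by
    intro h1
    apply hχ
    rw [MulChar.eq_one_iff]
    intro u
    have hord : orderOf hgu.unit = p - 1 := by
      rw [← orderOf_units, IsUnit.unit_spec, hg]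
    have hcard : Nat.card (ZMod p)ˣ = p - 1 := by
      rw [Nat.card_eq_fintype_card, ZMod.card_units_eq_totient, Nat.totient_prime hp]
    have htop : Subgroup.zpowers hgu.unit = ⊤ := by
      rw [← Subgroup.card_eq_iff_eq_top, Nat.card_zpowers, hord, hcard]
    have hu : u ∈ Submonoid.powers hgu.unit := by
      rw [mem_powers_iff_mem_zpowers]
      exact htop ▸ Subgroup.mem_top u
    obtain ⟨k, rfl⟩ := hu
    show χ ((hgu.unit ^ k : (ZMod p)ˣ) : ZMod p) = 1
    rw [Units.val_pow_eq_pow_val, IsUnit.unit_spec, map_pow, h1, one_pow]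
  -- m is a unit mod p
  have hmu : IsUnit ((m : ℕ) : ZMod p) := by
    rw [ZMod.isUnit_iff_coprime]
    exact (hp.coprime_iff_not_dvd.mpr hm).symm
  have habs_m : ‖χ (m : ZMod p)‖ = 1 := by
    have := χ.unit_norm_eq_one hmu.unit
    rwa [IsUnit.unit_spec] at this
  have habs_g : ‖χ (g : ZMod p)‖ = 1 := by
    have := χ.unit_norm_eq_one hgu.unit
    rwa [IsUnit.unit_spec] at this
  have ha : ‖(χ (m : ZMod p))⁻¹‖ = 1 := by
    rw [norm_inv, habs_m]; norm_num
  have hbabs : ‖(χ (g : ZMod p))⁻¹‖ = 1 := by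
    rw [norm_inv, habs_g]; norm_num
  have hb1 : (χ (g : ZMod p))⁻¹ ≠ 1 := by
    intro h1
    apply hχg
    have hne : χ (g : ZMod p) ≠ 0 := by
      intro h0; rw [h0] at habs_g; simp at habs_g
    field_simp at h1
    exact h1.symm
  have hc : (2 : ℝ) ≤ (m : ℝ) - 1 := by
    have : (3 : ℝ) ≤ m := by exact_mod_cast hm3
    linarith
  have := stmt3_aux_abs _ _ ha hbabs hb1 ((m : ℝ) - 1) hc
  rwa [show (((m : ℝ) - 1 : ℝ) : ℂ) = (m : ℂ) - 1 by push_cast; ring] at this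

theorem stmt3 (p q : ℕ) (hp : p.Prime) (hq : q.Prime) (hpodd : Odd p) (hqodd : Odd q)
    (hpq : p < q) :
    (∀ (g : ℕ) (χ : DirichletCharacter ℂ p), orderOf (g : ZMod p) = p - 1 →
      χ ≠ 1 → χ.Even → χ.conductor = p →
      2 * ((χ (q : ZMod p))⁻¹ - 1) + ((χ (g : ZMod p))⁻¹ - 1) * ((q : ℂ) - 1) ≠ 0) ∧
    (∀ (h : ℕ) (χ : DirichletCharacter ℂ q), orderOf (h : ZMod q) = q - 1 →
      χ ≠ 1 → χ.Even → χ.conductor = q →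
      2 * ((χ (p : ZMod q))⁻¹ - 1) + ((χ (h : ZMod q))⁻¹ - 1) * ((p : ℂ) - 1) ≠ 0) := by
  have hp3 : 3 ≤ p := by
    have h2 : p ≠ 2 := by rintro rfl; exact (by norm_num : ¬ Odd 2) hpodd
    have := hp.two_le
    omega
  constructor
  · intro g χ hg hχ _ _
    exact stmt3_aux p q g hp hpodd
      (fun hdvd => absurd ((Nat.prime_dvd_prime_iff_eq hp hq).mp hdvd) hpq.ne) (by omega) χ hg hχ
  · intro h χ hh hχ _ _
    exact stmt3_aux q p h hq hqodd
      (fun hdvd => absurd (Nat.le_of_dvd (by omega) hdvd) (by omega)) hp3 χ hh hχ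
end

section
/- Let l be a prime, a ≥ 0 an integer, m a positive integer with gcd(m, l) = 1, and φ ∈ ℤ_l[x] a monic irreducible factor of x^m - 1 of degree f. Then the ring ℤ_l[x]/(φ(x^{l^a})) is a local ring with maximal ideal generated by l and φ(x), and its residue field is finite of order l^f. -/
open Polynomial

namespace Stmt14Aux

variable {l : ℕ} [Fact l.Prime]

lemma toZMod_surj : Function.Surjective (PadicInt.toZMod : ℤ_[l] →+* ZMod l) := by
  haveI : NeZero l := ⟨(Fact.out : l.Prime).ne_zero⟩
  intro x
  obtain ⟨n, rfl⟩ := ZMod.natCast_rightInverse.surjective x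
  exact ⟨(n : ℤ_[l]), map_natCast _ n⟩

lemma toZMod_natCast_self : (PadicInt.toZMod ((l : ℤ_[l]))) = 0 := by
  rw [map_natCast]; exact ZMod.natCast_self l

lemma mem_span_iff (φ g : Polynomial ℤ_[l]) :
    g.map (PadicInt.toZMod) ∈ Ideal.span {φ.map (PadicInt.toZMod)} ↔
      g ∈ Ideal.span {(C (l : ℤ_[l])), φ} := by
  constructor
  · intro hg
    rw [Ideal.mem_span_singleton] at hg
    obtain ⟨hb, hhb⟩ := hg
    obtain ⟨h, rfl⟩ := Polynomial.map_surjective _ toZMod_surj hb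
    have hcd : C ((l : ℤ_[l])) ∣ g - φ * h := by
      rw [Polynomial.C_dvd_iff_dvd_coeff]
      intro i
      have h0 : (g - φ * h).map (PadicInt.toZMod) = 0 := by
        rw [Polynomial.map_sub, Polynomial.map_mul, hhb, sub_self]
      have hc : PadicInt.toZMod ((g - φ * h).coeff i) = 0 := by
        rw [← Polynomial.coeff_map, h0, Polynomial.coeff_zero]
      have hmem : (g - φ * h).coeff i ∈ IsLocalRing.maximalIdeal ℤ_[l] := by
        rw [← PadicInt.ker_toZMod]; exact hc
      rwa [PadicInt.maximalIdeal_eq_span_p, Ideal.mem_span_singleton] at hmem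
    obtain ⟨k, hk⟩ := hcd
    rw [Ideal.mem_span_pair]
    exact ⟨k, h, by linear_combination -hk⟩
  · intro hg
    rw [Ideal.mem_span_pair] at hg
    obtain ⟨u, v, huv⟩ := hg
    rw [← huv, Polynomial.map_add, Polynomial.map_mul, Polynomial.map_mul, Polynomial.map_C,
      toZMod_natCast_self, map_zero, mul_zero, zero_add]
    exact Ideal.mul_mem_left _ _ (Ideal.mem_span_singleton_self _)

lemma map_comp_pow (φ : Polynomial ℤ_[l]) (a : ℕ) :
    (φ.comp (X ^ l ^ a)).map (PadicInt.toZMod) = (φ.map (PadicInt.toZMod)) ^ l ^ a := by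
  rw [Polynomial.map_comp, Polynomial.map_pow, Polynomial.map_X,
    ← Polynomial.expand_eq_comp_X_pow]
  have := Polynomial.map_iterateFrobenius_expand l (φ.map (PadicInt.toZMod)) a
  rwa [show iterateFrobenius (ZMod l) l a = RingHom.id _ from Subsingleton.elim _ _,
    Polynomial.map_id] at this

lemma C_dvd_sub (φ : Polynomial ℤ_[l]) (a : ℕ)
    (hmap : (φ.comp (X ^ l ^ a)).map (PadicInt.toZMod) = (φ.map (PadicInt.toZMod)) ^ l ^ a) :
    C ((l : ℤ_[l])) ∣ φ.comp (X ^ l ^ a) - φ ^ l ^ a := by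
  rw [Polynomial.C_dvd_iff_dvd_coeff]
  intro i
  have h0 : (φ.comp (X ^ l ^ a) - φ ^ l ^ a).map (PadicInt.toZMod) = 0 := by
    rw [Polynomial.map_sub, hmap, Polynomial.map_pow, sub_self]
  have hc : PadicInt.toZMod ((φ.comp (X ^ l ^ a) - φ ^ l ^ a).coeff i) = 0 := by
    rw [← Polynomial.coeff_map, h0, Polynomial.coeff_zero]
  have hmem : (φ.comp (X ^ l ^ a) - φ ^ l ^ a).coeff i ∈ IsLocalRing.maximalIdeal ℤ_[l] := by
    rw [← PadicInt.ker_toZMod]; exact hc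
  rwa [PadicInt.maximalIdeal_eq_span_p, Ideal.mem_span_singleton] at hmem

lemma exists_idem_pow {M : Type*} [CommMonoid M] [Finite M] (x : M) :
    ∃ n : ℕ, 0 < n ∧ x ^ n * x ^ n = x ^ n := by
  obtain ⟨i, j, hij, hxij⟩ := Finite.exists_ne_map_eq_of_infinite (fun n : ℕ => x ^ n)
  wlog hlt : i < j generalizing i j
  · exact this j i hij.symm hxij.symm (by omega)
  set k := j - i with hk
  have hkpos : 0 < k := by omega
  have step : ∀ n, i ≤ n → x ^ (n + k) = x ^ n := by
    intro n hn
    have : x ^ (n + k) = x ^ (n - i) * x ^ j := by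
      rw [← pow_add]; congr 1; omega
    rw [this, ← hxij, ← pow_add]
    congr 1; omega
  have multi : ∀ t n, i ≤ n → x ^ (n + k * t) = x ^ n := by
    intro t
    induction t with
    | zero => simp
    | succ t ih =>
      intro n hn
      have : n + k * (t + 1) = (n + k) + k * t := by ring
      rw [this, ih _ (by omega), step _ hn]
  refine ⟨k * (i + 1), by positivity, ?_⟩
  rw [← pow_add]
  have : k * (i + 1) + k * (i + 1) = k * (i + 1) + k * (i + 1) := rfl
  rw [show k * (i + 1) + k * (i + 1) = (k * (i+1)) + k * (i + 1) from rfl]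
  exact multi (i + 1) (k * (i + 1)) (by nlinarith)

lemma isField_of_finite_reduced {T : Type*} [CommRing T] [Nontrivial T] [Finite T] [IsReduced T]
    (hidem : ∀ e : T, e * e = e → e = 0 ∨ e = 1) : IsField T := by
  refine ⟨exists_pair_ne T, mul_comm, ?_⟩
  intro x hx
  obtain ⟨n, hn, hidemx⟩ := exists_idem_pow x
  rcases hidem _ hidemx with h0 | h1
  · exact absurd (IsReduced.eq_zero x ⟨n, h0⟩) hx
  · refine ⟨x ^ (n - 1), ?_⟩
    calc x * x ^ (n - 1) = x ^ n := by rw [← pow_succ']; congr 1; omega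
    _ = 1 := h1

set_option maxHeartbeats 1000000 in
lemma irreducible_map (φ : Polynomial ℤ_[l]) (hmon : φ.Monic) (hirr : Irreducible φ)
    (m : ℕ) (hmpos : 0 < m) (hm : Nat.Coprime m l) (hdvd : φ ∣ X ^ m - 1) :
    Irreducible (φ.map (PadicInt.toZMod)) := by
  set φb : Polynomial (ZMod l) := φ.map (PadicInt.toZMod) with hφb
  have hbmon : φb.Monic := hmon.map _
  have hφbne : φb ≠ 0 := hbmon.ne_zero
  have hndeg : φ.natDegree ≠ 0 := by
    intro h
    exact hirr.not_isUnit (by rw [hmon.natDegree_eq_zero.mp h]; exact isUnit_one)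
  have hbdeg : φb.natDegree = φ.natDegree := hmon.natDegree_map _
  -- squarefree
  have hmne : (m : ZMod l) ≠ 0 := by
    intro h
    rw [ZMod.natCast_eq_zero_iff] at h
    exact ((Nat.Prime.coprime_iff_not_dvd Fact.out).mp hm.symm) h
  have hφbdvd : φb ∣ X ^ m - 1 := by
    have := Polynomial.map_dvd (PadicInt.toZMod (p := l)) hdvd
    rwa [Polynomial.map_sub, Polynomial.map_pow, Polynomial.map_X, Polynomial.map_one] at this
  have hsf : Squarefree φb :=
    ((X_pow_sub_one_separable_iff.mpr hmne).squarefree).squarefree_of_dvd hφbdvd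
  -- the domain S = AdjoinRoot φ
  have hprime : Prime φ := (UniqueFactorizationMonoid.irreducible_iff_prime).mp hirr
  haveI hspanp : (Ideal.span {φ}).IsPrime := (Ideal.span_singleton_prime hmon.ne_zero).mpr hprime
  haveI : IsDomain (AdjoinRoot φ) :=
    inferInstanceAs (IsDomain (Polynomial ℤ_[l] ⧸ Ideal.span {φ}))
  -- the reduction map π
  have hroot : φ.eval₂ ((AdjoinRoot.of φb).comp PadicInt.toZMod) (AdjoinRoot.root φb) = 0 := by
    rw [← Polynomial.eval₂_map]
    exact AdjoinRoot.eval₂_root φb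
  set π : AdjoinRoot φ →+* AdjoinRoot φb :=
    AdjoinRoot.lift ((AdjoinRoot.of φb).comp PadicInt.toZMod) (AdjoinRoot.root φb) hroot with hπ
  have hπmk : ∀ g : Polynomial ℤ_[l],
      π (AdjoinRoot.mk φ g) = AdjoinRoot.mk φb (g.map PadicInt.toZMod) := by
    intro g
    rw [hπ, AdjoinRoot.lift_mk, ← AdjoinRoot.aeval_eq, aeval_def, AdjoinRoot.algebraMap_eq,
      Polynomial.eval₂_map]
  have hπsurj : Function.Surjective π := by
    intro t
    obtain ⟨g', rfl⟩ := AdjoinRoot.mk_surjective t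
    obtain ⟨g, rfl⟩ := Polynomial.map_surjective _ toZMod_surj g'
    exact ⟨AdjoinRoot.mk φ g, hπmk g⟩
  set ps : AdjoinRoot φ := AdjoinRoot.of φ ((l : ℤ_[l])) with hps
  have hπps : π ps = 0 := by
    rw [hps, AdjoinRoot.of, RingHom.comp_apply, hπmk, Polynomial.map_C, toZMod_natCast_self, C_0, map_zero]
  have hπ0 : ∀ s, ps ∣ s → π s = 0 := by
    rintro s ⟨y, rfl⟩
    rw [map_mul, hπps, zero_mul]
  have hker1 : ∀ s, π s = 0 → ps ∣ s := by
    intro s hs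
    obtain ⟨g, rfl⟩ := AdjoinRoot.mk_surjective s
    rw [hπmk, AdjoinRoot.mk_eq_zero, ← Ideal.mem_span_singleton, mem_span_iff,
      Ideal.mem_span_pair] at hs
    obtain ⟨u, v, huv⟩ := hs
    refine ⟨AdjoinRoot.mk φ u, ?_⟩
    have : AdjoinRoot.mk φ g - ps * AdjoinRoot.mk φ u = AdjoinRoot.mk φ (v * φ) := by
      rw [hps, AdjoinRoot.of, RingHom.comp_apply, ← map_mul, ← map_sub]
      congr 1
      linear_combination -huv
    have h2 : AdjoinRoot.mk φ (v * φ) = 0 := by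
      rw [map_mul, AdjoinRoot.mk_self, mul_zero]
    have := this.trans h2
    linear_combination this
  -- Newton idempotent lifting
  have hlift : ∀ eb : AdjoinRoot φb, eb * eb = eb → eb = 0 ∨ eb = 1 := by
    intro eb heb
    obtain ⟨e0, rfl⟩ := hπsurj eb
    set E : ℕ → AdjoinRoot φ := fun n => Nat.rec e0 (fun _ x => 3*x^2 - 2*x^3) n with hE
    have hE0 : E 0 = e0 := rfl
    have hEs : ∀ n, E (n+1) = 3*(E n)^2 - 2*(E n)^3 := fun n => rfl
    have h1 : ∀ n, ps ^ 2 ^ n ∣ (E n)^2 - E n := by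
      intro n
      induction n with
      | zero =>
        rw [pow_zero, pow_one, hE0]
        refine hker1 _ ?_
        rw [map_sub, pow_two, map_mul, heb, sub_self]
      | succ n ih =>
        have hid : (E (n+1))^2 - E (n+1) =
            ((E n)^2 - E n)^2 * (4*((E n)^2 - E n) - 3) := by
          rw [hEs]; ring
        rw [hid, pow_succ, pow_mul]
        exact (pow_dvd_pow_of_dvd ih 2).mul_right _
    have h2 : ∀ n, ps ^ 2 ^ n ∣ E (n+1) - E n := by
      intro n
      have hid : E (n+1) - E n = ((E n)^2 - E n) * (1 - 2 * E n) := by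
        rw [hEs]; ring
      exact hid ▸ (h1 n).mul_right _
    have h3 : ∀ n m', n ≤ m' → ps^n ∣ E m' - E n := by
      intro n m' h
      induction m', h using Nat.le_induction with
      | base => simp
      | succ k hk ih =>
        have hn2 : n ≤ 2^k := le_trans hk (Nat.lt_two_pow_self).le
        have hstep : ps ^ n ∣ E (k+1) - E k := (pow_dvd_pow ps hn2).trans (h2 k)
        have := dvd_add hstep ih
        rwa [sub_add_sub_cancel] at this
    let pb := AdjoinRoot.powerBasis' hmon
    set B := pb.basis with hB
    have hco : ∀ (n : ℕ) (s : AdjoinRoot φ), ps^n ∣ s → ∀ i, (l:ℤ_[l])^n ∣ B.repr s i := by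
      rintro n s ⟨y, rfl⟩ i
      have hsm : ps ^ n * y = ((l:ℤ_[l])^n) • y := by
        rw [Algebra.smul_def, map_pow, AdjoinRoot.algebraMap_eq, hps]
      rw [hsm, map_smul, Finsupp.smul_apply, smul_eq_mul]
      exact Dvd.intro _ rfl
    have hIpow : ∀ n : ℕ, ∀ c : ℤ_[l],
        c ∈ ((IsLocalRing.maximalIdeal ℤ_[l])^n • ⊤ : Submodule ℤ_[l] ℤ_[l]) →
        (l:ℤ_[l])^n ∣ c := by
      intro n c hc
      have hle : ((IsLocalRing.maximalIdeal ℤ_[l])^n • ⊤ : Submodule ℤ_[l] ℤ_[l]) ≤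
          Ideal.span {(l:ℤ_[l])^n} := by
        rw [Submodule.smul_le]
        intro r hr x _
        rw [smul_eq_mul]
        refine Ideal.mul_mem_right _ _ ?_
        rwa [PadicInt.maximalIdeal_eq_span_p, Ideal.span_singleton_pow] at hr
      exact (Ideal.mem_span_singleton).mp (hle hc)
    have hmemP : ∀ n : ℕ, ∀ c : ℤ_[l], (l:ℤ_[l])^n ∣ c →
        c ∈ ((IsLocalRing.maximalIdeal ℤ_[l])^n • ⊤ : Submodule ℤ_[l] ℤ_[l]) := by
      rintro n c ⟨d, rfl⟩
      have hp : (l:ℤ_[l])^n ∈ (IsLocalRing.maximalIdeal ℤ_[l])^n :=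
        Ideal.pow_mem_pow
          (by rw [PadicInt.maximalIdeal_eq_span_p]; exact Ideal.mem_span_singleton_self _) n
      simpa [smul_eq_mul] using Submodule.smul_mem_smul hp (Submodule.mem_top (x := d))
    have key : ∀ i, ∃ L : ℤ_[l], ∀ n, B.repr (E n) i ≡ L
        [SMOD ((IsLocalRing.maximalIdeal ℤ_[l])^n • ⊤ : Submodule ℤ_[l] ℤ_[l])] := by
      intro i
      refine IsPrecomplete.prec (IsAdicComplete.toIsPrecomplete) ?_
      intro n n' hnn'
      rw [SModEq.sub_mem]
      refine hmemP n _ ?_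
      have hc' := hco n _ (h3 n n' hnn') i
      rw [map_sub, Finsupp.sub_apply] at hc'
      obtain ⟨c, hc⟩ := hc'
      exact ⟨-c, by linear_combination -hc⟩
    choose L hL using key
    set e : AdjoinRoot φ := ∑ i, L i • B i with he
    have h4 : ∀ n, ps^n ∣ e - E n := by
      intro n
      have hdiff : ∀ i, ∃ d : ℤ_[l], L i - B.repr (E n) i = (l:ℤ_[l])^n * d := by
        intro i
        obtain ⟨d, hd⟩ := hIpow n _ (SModEq.sub_mem.mp (hL i n))
        exact ⟨-d, by linear_combination -hd⟩
      choose d hd using hdiff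
      refine ⟨∑ i, d i • B i, ?_⟩
      calc e - E n = ∑ i, (L i - B.repr (E n) i) • B i := by
            conv_lhs => rw [he, ← B.sum_repr (E n)]
            rw [← Finset.sum_sub_distrib]
            exact Finset.sum_congr rfl fun i _ => (sub_smul _ _ _).symm
        _ = ps^n * ∑ i, d i • B i := by
            rw [Finset.mul_sum]
            refine Finset.sum_congr rfl fun i _ => ?_
            rw [hd i, mul_smul, Algebra.smul_def, map_pow, AdjoinRoot.algebraMap_eq, hps]
    have h5 : ∀ n, ps^n ∣ e*e - e := by
      intro n
      have hid : e*e - e = ((E n)^2 - E n) + (e - E n) * (e + E n - 1) := by ring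
      have hn2 : n ≤ 2^n := (Nat.lt_two_pow_self).le
      exact hid ▸ dvd_add ((pow_dvd_pow ps hn2).trans (h1 n)) ((h4 n).mul_right _)
    have h6 : e*e - e = 0 := by
      have hz : ∀ i, B.repr (e*e - e) i = 0 := by
        intro i
        refine IsHausdorff.haus (inferInstance : IsHausdorff (IsLocalRing.maximalIdeal ℤ_[l]) ℤ_[l]) (B.repr (e*e - e) i) (fun n => ?_)
        rw [SModEq.zero]
        exact hmemP n _ (hco n _ (h5 n) i)
      have hrz : B.repr (e*e - e) = 0 := Finsupp.ext hz
      exact (LinearEquiv.map_eq_zero_iff B.repr).mp hrz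
    have hidm : e = 0 ∨ e = 1 := by
      rcases mul_eq_zero.mp (show e * (e - 1) = 0 by linear_combination h6) with h | h
      · exact Or.inl h
      · exact Or.inr (by linear_combination h)
    have hπe : π e = π e0 := by
      have hd : ps ∣ e - e0 := by
        have d1 : ps ∣ e - E 1 := by simpa using h4 1
        have d2 : ps ∣ E 1 - E 0 := by simpa using h2 0
        have := dvd_add d1 d2
        rwa [sub_add_sub_cancel, hE0] at this
      have := hπ0 _ hd
      rwa [map_sub, sub_eq_zero] at this
    rcases hidm with h | h
    · exact Or.inl (by rw [← hπe, h, map_zero])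
    · exact Or.inr (by rw [← hπe, h, map_one])
  haveI : Nontrivial (AdjoinRoot φb) := by
    refine AdjoinRoot.nontrivial φb ?_
    rw [Polynomial.degree_eq_natDegree hφbne, hbdeg]
    exact_mod_cast hndeg
  haveI : Module.Finite (ZMod l) (AdjoinRoot φb) :=
    Module.Finite.of_basis (AdjoinRoot.powerBasis hφbne).basis
  haveI : Finite (AdjoinRoot φb) := Module.finite_of_finite (ZMod l)
  haveI : IsReduced (AdjoinRoot φb) :=
    (Ideal.isRadical_iff_quotient_reduced _).mp (isRadical_iff_span_singleton.mp hsf.isRadical)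
  have hfield : IsField (AdjoinRoot φb) := isField_of_finite_reduced hlift
  have hmax : (Ideal.span {φb}).IsMaximal := Ideal.Quotient.maximal_of_isField _ hfield
  have hpr : Prime φb := (Ideal.span_singleton_prime hφbne).mp hmax.isPrime
  exact hpr.irreducible

end Stmt14Aux

open Stmt14Aux in
open Polynomial in
theorem stmt14 (l : ℕ) [Fact l.Prime] (a m f : ℕ) (hmpos : 0 < m) (hm : Nat.Coprime m l)
    (φ : Polynomial ℤ_[l]) (hmon : φ.Monic) (hirr : Irreducible φ)
    (hdvd : φ ∣ X ^ m - 1) (hf : φ.natDegree = f) :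
    ∃ hloc : IsLocalRing (Polynomial ℤ_[l] ⧸ Ideal.span {φ.comp (X ^ l ^ a)}),
      (@IsLocalRing.maximalIdeal _ _ hloc =
        Ideal.span {Ideal.Quotient.mk (Ideal.span {φ.comp (X ^ l ^ a)}) (C (l : ℤ_[l])),
          Ideal.Quotient.mk (Ideal.span {φ.comp (X ^ l ^ a)}) φ}) ∧
      Nat.card (@IsLocalRing.ResidueField _ _ hloc) = l ^ f := by
  classical
  have hla : 0 < l ^ a := pow_pos (Fact.out : l.Prime).pos a
  set ψ : Polynomial ℤ_[l] := φ.comp (X ^ l ^ a) with hψdef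
  set I : Ideal (Polynomial ℤ_[l]) := Ideal.span {ψ} with hIdef
  set φb : Polynomial (ZMod l) := φ.map (PadicInt.toZMod) with hφbdef
  have hbirr : Irreducible φb := irreducible_map φ hmon hirr m hmpos hm hdvd
  have hbmon : φb.Monic := hmon.map _
  have hφbne : φb ≠ 0 := hbmon.ne_zero
  have hbdeg : φb.natDegree = f := by rw [hmon.natDegree_map]; exact hf
  have hψmon : ψ.Monic := hmon.comp (monic_X_pow _) (by
    rw [natDegree_X_pow]; omega)
  -- the target field T
  have hmaxb : (Ideal.span {φb}).IsMaximal :=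
    PrincipalIdealRing.isMaximal_of_irreducible hbirr
  set T := Polynomial (ZMod l) ⧸ Ideal.span {φb} with hTdef
  have hTfield : IsField T := (Ideal.Quotient.maximal_ideal_iff_isField_quotient _).mp hmaxb
  set Φ : Polynomial ℤ_[l] →+* T :=
    (Ideal.Quotient.mk (Ideal.span {φb})).comp (mapRingHom PadicInt.toZMod) with hΦdef
  have hΦsurj : Function.Surjective Φ :=
    (Ideal.Quotient.mk_surjective).comp (Polynomial.map_surjective _ toZMod_surj)
  have hkerΦ : RingHom.ker Φ = Ideal.span {C ((l : ℤ_[l])), φ} := by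
    ext g
    rw [RingHom.mem_ker, hΦdef, RingHom.comp_apply, Polynomial.coe_mapRingHom,
      Ideal.Quotient.eq_zero_iff_mem]
    exact mem_span_iff φ g
  have hψmem : ψ ∈ Ideal.span {C ((l : ℤ_[l])), φ} := by
    obtain ⟨k, hk⟩ := C_dvd_sub φ a (map_comp_pow φ a)
    have h1 : φ ^ (l ^ a - 1) * φ = φ ^ l ^ a := by
      rw [← pow_succ]; congr 1; omega
    exact Ideal.mem_span_pair.mpr ⟨k, φ ^ (l ^ a - 1), by linear_combination -hk + h1⟩
  have hIle : ∀ x ∈ I, Φ x = 0 := by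
    intro x hx
    rw [← RingHom.mem_ker, hkerΦ]
    rw [hIdef, Ideal.mem_span_singleton] at hx
    obtain ⟨y, rfl⟩ := hx
    exact Ideal.mul_mem_right _ _ hψmem
  set Φ' : (Polynomial ℤ_[l] ⧸ I) →+* T := Ideal.Quotient.lift I Φ hIle with hΦ'def
  have hΦ'surj : Function.Surjective Φ' := by
    intro t
    obtain ⟨g, hg⟩ := hΦsurj t
    exact ⟨Ideal.Quotient.mk I g, by rw [hΦ'def, Ideal.Quotient.lift_mk]; exact hg⟩
  set M : Ideal (Polynomial ℤ_[l] ⧸ I) :=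
    Ideal.span {Ideal.Quotient.mk I (C ((l : ℤ_[l]))), Ideal.Quotient.mk I φ} with hMdef
  have hkerΦ' : RingHom.ker Φ' = M := by
    rw [hΦ'def, Ideal.ker_quotient_lift Φ hIle, hkerΦ, Ideal.map_span, Set.image_insert_eq,
      Set.image_singleton, hMdef]
  have hMfield : IsField ((Polynomial ℤ_[l] ⧸ I) ⧸ M) := by
    have e2 : ((Polynomial ℤ_[l] ⧸ I) ⧸ M) ≃+* T := by
      rw [← hkerΦ']
      exact RingHom.quotientKerEquivOfSurjective hΦ'surj
    exact e2.toMulEquiv.isField hTfield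
  have hMmax : M.IsMaximal := (Ideal.Quotient.maximal_ideal_iff_isField_quotient M).mpr hMfield
  -- every maximal ideal equals M
  haveI hRfin : Module.Finite ℤ_[l] (Polynomial ℤ_[l] ⧸ I) :=
    Module.Finite.of_basis (AdjoinRoot.powerBasis' hψmon).basis
  haveI : Algebra.IsIntegral ℤ_[l] (Polynomial ℤ_[l] ⧸ I) := Algebra.IsIntegral.of_finite _ _
  have halg : ∀ c : ℤ_[l], algebraMap ℤ_[l] (Polynomial ℤ_[l] ⧸ I) c =
      Ideal.Quotient.mk I (C c) := fun c => rfl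
  have huniq : ∀ J : Ideal (Polynomial ℤ_[l] ⧸ I), J.IsMaximal → M ≤ J := by
    intro J hJ
    haveI := hJ
    have hcomap : (J.comap (algebraMap ℤ_[l] (Polynomial ℤ_[l] ⧸ I))).IsMaximal :=
      Ideal.isMaximal_comap_of_isIntegral_of_isMaximal J
    have hceq : J.comap (algebraMap ℤ_[l] (Polynomial ℤ_[l] ⧸ I)) =
        IsLocalRing.maximalIdeal ℤ_[l] := IsLocalRing.eq_maximalIdeal hcomap
    have hlJ : Ideal.Quotient.mk I (C ((l : ℤ_[l]))) ∈ J := by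
      have hmem : (l : ℤ_[l]) ∈ J.comap (algebraMap ℤ_[l] (Polynomial ℤ_[l] ⧸ I)) := by
        rw [hceq, PadicInt.maximalIdeal_eq_span_p]
        exact Ideal.mem_span_singleton_self _
      rw [Ideal.mem_comap, halg] at hmem
      exact hmem
    have hφJ : Ideal.Quotient.mk I φ ∈ J := by
      have h0 : Ideal.Quotient.mk I ψ = 0 := by
        rw [Ideal.Quotient.eq_zero_iff_mem, hIdef]
        exact Ideal.subset_span rfl
      obtain ⟨k, hk⟩ := C_dvd_sub φ a (map_comp_pow φ a)
      have hpow : (Ideal.Quotient.mk I φ) ^ l ^ a =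
          Ideal.Quotient.mk I (C ((l : ℤ_[l]))) * (- Ideal.Quotient.mk I k) := by
        rw [← map_pow]
        have hφψ : φ ^ l ^ a = ψ - C ((l : ℤ_[l])) * k := by linear_combination -hk
        rw [hφψ, map_sub, h0, zero_sub, map_mul]
        ring
      have : (Ideal.Quotient.mk I φ) ^ l ^ a ∈ J := hpow ▸ Ideal.mul_mem_right _ _ hlJ
      exact hJ.isPrime.mem_of_pow_mem _ this
    rw [hMdef, Ideal.span_le]
    rintro z hz
    simp only [Set.mem_insert_iff, Set.mem_singleton_iff] at hz
    rcases hz with rfl | rfl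
    · exact hlJ
    · exact hφJ
  have hloc : IsLocalRing (Polynomial ℤ_[l] ⧸ I) :=
    IsLocalRing.of_unique_max_ideal
      ⟨M, hMmax, fun J hJ => (hMmax.eq_of_le hJ.ne_top (huniq J hJ)).symm⟩
  haveI := hloc
  refine ⟨hloc, ?_, ?_⟩
  · exact (IsLocalRing.eq_maximalIdeal hMmax).symm
  · -- cardinality of the residue field
    have hmeq : IsLocalRing.maximalIdeal (Polynomial ℤ_[l] ⧸ I) = M :=
      (IsLocalRing.eq_maximalIdeal hMmax).symm
    have e1 : (@IsLocalRing.ResidueField _ _ hloc) ≃+* ((Polynomial ℤ_[l] ⧸ I) ⧸ M) :=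
      Ideal.quotEquivOfEq hmeq
    have e2 : ((Polynomial ℤ_[l] ⧸ I) ⧸ M) ≃+* T := by
      rw [← hkerΦ']
      exact RingHom.quotientKerEquivOfSurjective hΦ'surj
    rw [Nat.card_congr (e1.trans e2).toEquiv]
    -- card of T
    let pb : PowerBasis (ZMod l) (AdjoinRoot φb) := AdjoinRoot.powerBasis hφbne
    have hdim : pb.dim = f := by
      show φb.natDegree = f
      exact hbdeg
    have e3 : T ≃ (Fin pb.dim → ZMod l) := pb.basis.equivFun.toEquiv
    rw [Nat.card_congr e3]
    simp [Nat.card_fun, Nat.card_zmod, hdim]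
end

section
/- Let p < q be distinct odd primes, let l be an odd prime and M a power of l, let L be a subfield of ℚ(ζ_{pq})⁺, and let ε be a unit of the ring of integers of L. Fix the real embedding of ℚ(ζ_{pq})⁺ and consider the polynomial P(X) = ∏_{a ∈ Gal(L/ℚ)} (X - (a(ε))^{1/M}), where (a(ε))^{1/M} denotes the real M-th root of the real number a(ε). If P(X) has coefficients in ℤ, then ε is an M-th power in ℚ(ζ_{pq})⁺. -/
open scoped NumberField IntermediateField

noncomputable def zetaC (n : ℕ) : ℂ := Complex.exp (2 * (Real.pi : ℂ) * Complex.I / n)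

noncomputable def Kplus (n : ℕ) : IntermediateField ℚ ℂ := ℚ⟮zetaC n + (zetaC n)⁻¹⟯

instance Kplus.instNumberField (n : ℕ) : NumberField (Kplus n) := by
  have hint : IsIntegral ℚ (zetaC n + (zetaC n)⁻¹) := by
    rcases eq_or_ne n 0 with rfl | hn
    · have h1 : zetaC 0 = 1 := by simp [zetaC]
      rw [h1]
      norm_num
      have h2 := isIntegral_algebraMap (R := ℚ) (A := ℂ) (x := 2)
      simpa using h2
    · have hζ : IsPrimitiveRoot (zetaC n) n := Complex.isPrimitiveRoot_exp n hn
      have h1 : IsIntegral ℚ (zetaC n) :=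
        (hζ.isIntegral (Nat.pos_of_ne_zero hn)).tower_top
      have h2 : IsIntegral ℚ (zetaC n)⁻¹ :=
        ((hζ.inv).isIntegral (Nat.pos_of_ne_zero hn)).tower_top
      exact h1.add h2
  have : FiniteDimensional ℚ ↥(ℚ⟮zetaC n + (zetaC n)⁻¹⟯) :=
    IntermediateField.adjoin.finiteDimensional hint
  have : FiniteDimensional ℚ (Kplus n) := this
  exact { }


open Polynomial in
set_option synthInstance.maxHeartbeats 1000000 in
set_option maxHeartbeats 1000000 in
theorem stmt16 (p q l M : ℕ) (hp : p.Prime) (hq : q.Prime) (hpodd : Odd p) (hqodd : Odd q)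
    (hpq : p < q) (hl : l.Prime) (hlodd : Odd l) (hMl : ∃ k : ℕ, M = l ^ k)
    (L : IntermediateField ℚ ℂ) (hL : L ≤ Kplus (p * q)) [FiniteDimensional ℚ L]
    (ε : (𝓞 L)ˣ) (r : (L ≃ₐ[ℚ] L) → ℝ)
    (hr : ∀ a : L ≃ₐ[ℚ] L,
      ((r a : ℂ)) ^ M = ((a ((ε : 𝓞 L) : L) : L) : ℂ))
    (hP : ∀ i : ℕ, ∃ z : ℤ,
      (∏ a : L ≃ₐ[ℚ] L, ((X : Polynomial ℝ) - C (r a))).coeff i = (z : ℝ)) :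
    ∃ β : Kplus (p * q), (β : ℂ) ^ M = (((ε : 𝓞 L) : L) : ℂ) := by
  classical
  obtain ⟨k, rfl⟩ := hMl
  set M := l ^ k with hM
  have hModd : Odd M := hlodd.pow
  have hM0 : M ≠ 0 := pow_ne_zero _ hl.pos.ne'
  set α : ℂ := ((r 1 : ℝ) : ℂ) with hα
  set εL : L := ((ε : 𝓞 L) : L) with hεL
  have hα1 : α ^ M = (εL : ℂ) := by
    have := hr 1
    simpa using this
  -- α is integral over L
  have hint : IsIntegral L α := by
    refine ⟨X ^ M - C εL, monic_X_pow_sub_C _ hM0, ?_⟩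
    simp [eval₂_sub, eval₂_pow, hα1]
  set m := minpoly L α with hm
  -- minpoly divides X^M - C εL
  have hdvd1 : m ∣ X ^ M - C εL := by
    apply minpoly.dvd
    simp [map_sub, map_pow, hα1]
  -- build integer polynomial
  set Pr : Polynomial ℝ := ∏ a : L ≃ₐ[ℚ] L, ((X : Polynomial ℝ) - C (r a)) with hPr
  choose z hz using hP
  set Pz : Polynomial ℤ := ∑ i ∈ Pr.support, C (z i) * X ^ i with hPz
  have hPzmap : Pz.map (Int.castRingHom ℝ) = Pr := by
    ext n
    rw [coeff_map]
    rw [hPz, finset_sum_coeff]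
    simp only [coeff_C_mul, coeff_X_pow, mul_ite, mul_one, mul_zero]
    rw [Finset.sum_ite_eq Pr.support n]
    by_cases h : n ∈ Pr.support
    · simp [h, ← hz n]
    · simp [h, (notMem_support_iff.mp h)]
  set PL : Polynomial L := Pz.map (Int.castRingHom L) with hPL
  have hPrval : Pr.eval (r 1) = 0 := by
    rw [hPr, eval_prod]
    apply Finset.prod_eq_zero (Finset.mem_univ (1 : L ≃ₐ[ℚ] L))
    simp
  have hPLmap : PL.map (algebraMap L ℂ) = Pr.map (algebraMap ℝ ℂ) := by
    rw [hPL, Polynomial.map_map, ← hPzmap, Polynomial.map_map]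
    congr 1
  have hdvd2 : m ∣ PL := by
    apply minpoly.dvd
    have h1 : aeval α PL = (PL.map (algebraMap L ℂ)).eval α := by
      rw [aeval_def, eval_map]
    rw [h1, hPLmap, hα, eval_map]
    have h2 : ((r 1 : ℝ) : ℂ) = algebraMap ℝ ℂ (r 1) := rfl
    rw [h2, eval₂_hom, hPrval, map_zero]
  -- roots of (m.map to ℂ) are all α
  have hmne : m ≠ 0 := minpoly.ne_zero hint
  set m' := m.map (algebraMap L ℂ) with hm'
  have hm'ne : m' ≠ 0 := Polynomial.map_ne_zero hmne
  have hroots : ∀ x ∈ m'.roots, x = α := by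
    intro x hx
    have hxroot : m'.eval x = 0 := (mem_roots hm'ne).mp hx
    -- x^M = εL
    have h1 : x ^ M = (εL : ℂ) := by
      obtain ⟨t, ht⟩ := hdvd1
      have : ((X ^ M - C εL : Polynomial L).map (algebraMap L ℂ)).eval x = 0 := by
        rw [ht, Polynomial.map_mul, eval_mul, ← hm', hxroot, zero_mul]
      simpa [sub_eq_zero] using this
    -- x is some (r b : ℂ)
    obtain ⟨b, hb⟩ : ∃ b : L ≃ₐ[ℚ] L, x = ((r b : ℝ) : ℂ) := by
      obtain ⟨t, ht⟩ := hdvd2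
      have : (PL.map (algebraMap L ℂ)).eval x = 0 := by
        rw [ht, Polynomial.map_mul, eval_mul, ← hm', hxroot, zero_mul]
      rw [hPLmap, hPr] at this
      rw [Polynomial.map_prod] at this
      simp only [Polynomial.map_sub, map_X, map_C, eval_prod, eval_sub, eval_X, eval_C] at this
      obtain ⟨b, -, hb⟩ := Finset.prod_eq_zero_iff.mp this
      exact ⟨b, by simpa [sub_eq_zero] using hb⟩
    -- conclude
    have hbM : ((r b : ℝ) : ℂ) ^ M = ((r 1 : ℝ) : ℂ) ^ M := by
      rw [← hb, h1, ← hα1]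
    have : (r b) ^ M = (r 1) ^ M := by
      exact_mod_cast hbM
    have := hModd.strictMono_pow (R := ℝ) |>.injective this
    rw [hb, this]
  -- m' splits, separable ⇒ degree 1
  have hsep : m.Separable := (minpoly.irreducible hint).separable
  have hnodup : m'.roots.Nodup := nodup_roots (hsep.map)
  have hcard : m.natDegree = Multiset.card m'.roots :=
    (by rw [← natDegree_map (algebraMap L ℂ)]; exact (IsAlgClosed.splits m').natDegree_eq_card_roots)
  have hone : m.natDegree = 1 := by
    have hge : 1 ≤ m.natDegree := minpoly.natDegree_pos hint
    have hsub : m'.roots ⊆ {α} := fun x hx => by simp [hroots x hx]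
    have hle : Multiset.card m'.roots ≤ 1 := by
      have := Multiset.card_le_card ((Multiset.le_iff_subset hnodup).mpr hsub)
      simpa using this
    omega
  have hmem : α ∈ (algebraMap L ℂ).range := minpoly.natDegree_eq_one_iff.mp hone
  obtain ⟨y, hy⟩ := hmem
  refine ⟨⟨(y : ℂ), hL y.2⟩, ?_⟩
  show ((y : ℂ)) ^ M = (εL : ℂ)
  rw [show ((y:ℂ)) = α from hy, hα1]
end
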